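/- For every B > 0 there exist a finite constant C > 0 and ε₀ > 0 such that for all 0 < ε < ε₀ and all β ∈ ℝ with |β| ≤ B ε^{−2}: 0 ≤ E^gv_β ≤ C and E^gv_β ≤ μ_β ≤ 2 E^gv_β, hence μ_β ≤ 2C. -/

import Mathlib

open MeasureTheory Real Set

noncomputable section

/-- `α := Ω₀ √(s+2)`. -/
def alphaP (s Ω₀ : ℝ) : ℝ := Ω₀ * Real.sqrt (s + 2)

/-- The half-width `η := (η₀/(2√Ω₀)) |log ε|` of the annulus (in rescaled coordinates). -/
def etaP (Ω₀ η₀ ε : ℝ) : ℝ := η₀ / (2 * Real.sqrt Ω₀) * |Real.log ε|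

/-- The trapping potential `W(x) = (1/s)(x^s − 1) − (1/2)(x² − 1)`. -/
def Wpot (s x : ℝ) : ℝ := 1 / s * (x ^ s - 1) - 1 / 2 * (x ^ 2 - 1)

/-- The fourth-order Taylor remainder `φ` of `W` at `x = 1`, defined by
`W(1+ε²y) = ((s−2)/2)ε⁴y² + ((s−2)(s−1)/6)ε⁶y³ + ε⁸φ(y)`. -/
def phiP (s ε : ℝ) (y : ℝ) : ℝ :=
  (Wpot s (1 + ε ^ 2 * y)
      - ((s - 2) / 2 * ε ^ 4 * y ^ 2 + (s - 2) * (s - 1) / 6 * ε ^ 6 * y ^ 3)) / ε ^ 8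

/-- The potential `U_β`. -/
def Ubeta (s Ω₀ ε β : ℝ) (y : ℝ) : ℝ :=
  ((alphaP s Ω₀) ^ 2 / 2 * y ^ 2 - 2 * Ω₀ * ε ^ 2 * β * y - Ω₀ * ε ^ 4 * β * y ^ 2
      + 1 / 2 * ε ^ 4 * β ^ 2) / (1 + ε ^ 2 * y) ^ 2

/-- The lower-order potential `v`. -/
def vP (s Ω₀ ε : ℝ) (y : ℝ) : ℝ :=
  Ω₀ ^ 2 * (s + (s - 1) * ε ^ 2 * y) / (1 + ε ^ 2 * y) ^ 2
    + (s - 1) * (s - 2) * Ω₀ ^ 2 / 6 + ε ^ 2 * Ω₀ ^ 2 * phiP s ε y / y ^ 3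

/-- The giant-vortex functional `E^gv_β[g]` on `(−η, η)`. -/
def betaFunctional (s Ω₀ η₀ ε β : ℝ) (g : ℝ → ℝ) : ℝ :=
  ∫ y in Set.Ioo (-(etaP Ω₀ η₀ ε)) (etaP Ω₀ η₀ ε),
    (1 + ε ^ 2 * y) *
      (1 / 2 * (deriv g y) ^ 2 + Ubeta s Ω₀ ε β y * (g y) ^ 2
        + ε ^ 2 * y ^ 3 * vP s Ω₀ ε y * (g y) ^ 2 + 1 / (2 * π) * (g y) ^ 4)

/-- Membership in the minimization domain `D^gv_β`: real-valued `g ∈ H¹((−η,η))` with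
weighted normalization `∫ (1+ε²y) g² = 1`. -/
def betaDomain (Ω₀ η₀ ε : ℝ) (g : ℝ → ℝ) : Prop :=
  MemLp g 2 (volume.restrict (Set.Ioo (-(etaP Ω₀ η₀ ε)) (etaP Ω₀ η₀ ε))) ∧
  MemLp (deriv g) 2 (volume.restrict (Set.Ioo (-(etaP Ω₀ η₀ ε)) (etaP Ω₀ η₀ ε))) ∧
  (∫ y in Set.Ioo (-(etaP Ω₀ η₀ ε)) (etaP Ω₀ η₀ ε), (1 + ε ^ 2 * y) * (g y) ^ 2) = 1

/-- The ground-state energy `E^gv_β`. -/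
def betaEnergy (s Ω₀ η₀ ε β : ℝ) : ℝ :=
  sInf (betaFunctional s Ω₀ η₀ ε β '' {g | betaDomain Ω₀ η₀ ε g})

/-- `g` is a minimizer of `E^gv_β` over `D^gv_β`. -/
def betaIsMinimizer (s Ω₀ η₀ ε β : ℝ) (g : ℝ → ℝ) : Prop :=
  betaDomain Ω₀ η₀ ε g ∧ betaFunctional s Ω₀ η₀ ε β g = betaEnergy s Ω₀ η₀ ε β

/-- The chemical potential `μ_β = E^gv_β + (1/(2π)) ∫ (1+ε²y) g_β⁴`. -/
def betaChemPot (s Ω₀ η₀ ε β : ℝ) (g : ℝ → ℝ) : ℝ :=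
  betaEnergy s Ω₀ η₀ ε β
    + 1 / (2 * π) * ∫ y in Set.Ioo (-(etaP Ω₀ η₀ ε)) (etaP Ω₀ η₀ ε),
        (1 + ε ^ 2 * y) * (g y) ^ 4


set_option maxHeartbeats 1000000

section Helpers

lemma hasDerivAt_one_add_rpow (p : ℝ) {u : ℝ} (hu : 0 < 1 + u) :
    HasDerivAt (fun x : ℝ => (1 + x) ^ p) (p * (1 + u) ^ (p - 1)) u := by
  have h1 : HasDerivAt (fun x : ℝ => 1 + x) 1 u := (hasDerivAt_id u).const_add 1
  have h2 := (Real.hasDerivAt_rpow_const (x := 1 + u) (p := p) (Or.inl hu.ne')).comp u h1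
  rw [mul_one] at h2
  exact h2

lemma rpow_taylor3 {s : ℝ} (hs : 2 < s) :
    ∃ K > 0, ∀ t : ℝ, |t| ≤ 1 / 2 →
      |(1 + t) ^ s - 1 - s * t - s * (s - 1) / 2 * t ^ 2| ≤ K * |t| ^ 3 := by
  have hs0 : (0:ℝ) < s := by linarith
  have hs1 : (0:ℝ) < s - 1 := by linarith
  have hs2 : (0:ℝ) < s - 2 := by linarith
  set K : ℝ := s * (s - 1) * (s - 2) * (8 * (3 / 2 : ℝ) ^ s) with hK
  have hKpos : 0 < K := by
    have : (0:ℝ) < 8 * (3 / 2 : ℝ) ^ s := by positivity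
    nlinarith [mul_pos (mul_pos hs0 hs1) hs2]
  refine ⟨K, hKpos, fun t ht => ?_⟩
  obtain ⟨htl, htr⟩ := abs_le.mp ht
  have hmem : ∀ u ∈ uIcc (0:ℝ) t, |u| ≤ |t| ∧ (1/2 : ℝ) ≤ 1 + u ∧ 1 + u ≤ 3/2 := by
    intro u hu
    rcases Set.mem_uIcc.mp hu with ⟨h1, h2⟩ | ⟨h1, h2⟩
    · have : |u| ≤ |t| := by rw [abs_of_nonneg h1]; exact le_trans h2 (le_abs_self t)
      exact ⟨this, by constructor <;> linarith⟩
    · have : |u| ≤ |t| := by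
        rw [abs_of_nonpos h2, abs_of_nonpos (by linarith : t ≤ 0)]; linarith
      exact ⟨this, by constructor <;> linarith⟩
  have hf3 : ∀ u : ℝ, (1/2 : ℝ) ≤ 1 + u → 1 + u ≤ 3/2 →
      |s * (s - 1) * ((s - 2) * (1 + u) ^ (s - 2 - 1))| ≤ K := by
    intro u h1 h2
    have hpos : (0:ℝ) < 1 + u := by linarith
    have hb : (1 + u) ^ (s - 2 - 1) ≤ 8 * (3/2 : ℝ) ^ s := by
      have e1 : (1 + u) ^ (s - 2 - 1) = (1 + u) ^ s * ((1 + u) ^ (3:ℝ))⁻¹ := by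
        rw [← Real.rpow_neg hpos.le, ← Real.rpow_add hpos]; ring_nf
      have e2 : (1 + u) ^ s ≤ (3/2 : ℝ) ^ s :=
        Real.rpow_le_rpow hpos.le h2 hs0.le
      have e3 : ((1:ℝ)/2) ^ (3:ℝ) ≤ (1 + u) ^ (3:ℝ) :=
        Real.rpow_le_rpow (by norm_num) h1 (by norm_num)
      have e4 : ((1 + u) ^ (3:ℝ))⁻¹ ≤ (((1:ℝ)/2) ^ (3:ℝ))⁻¹ :=
        inv_anti₀ (by positivity) e3
      have e5 : (((1:ℝ)/2) ^ (3:ℝ))⁻¹ = 8 := by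
        rw [show (3:ℝ) = ((3:ℕ):ℝ) by norm_num, Real.rpow_natCast]; norm_num
      calc (1 + u) ^ (s - 2 - 1) = (1 + u) ^ s * ((1 + u) ^ (3:ℝ))⁻¹ := e1
        _ ≤ (3/2:ℝ) ^ s * (((1:ℝ)/2) ^ (3:ℝ))⁻¹ := by
            apply mul_le_mul e2 e4 (by positivity) (by positivity)
        _ = 8 * (3/2:ℝ) ^ s := by rw [e5]; ring
    rw [abs_of_nonneg (by positivity)]
    calc s * (s - 1) * ((s - 2) * (1 + u) ^ (s - 2 - 1))
        ≤ s * (s - 1) * ((s - 2) * (8 * (3/2:ℝ) ^ s)) := by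
          apply mul_le_mul_of_nonneg_left _ (by positivity)
          exact mul_le_mul_of_nonneg_left hb hs2.le
      _ = K := by rw [hK]; ring
  have lvl2 : ∀ v ∈ uIcc (0:ℝ) t,
      |s * (s - 1) * (1 + v) ^ (s - 2) - s * (s - 1)| ≤ K * |v| := by
    intro v hv
    have hsub : uIcc (0:ℝ) v ⊆ uIcc (0:ℝ) t :=
      Set.uIcc_subset_uIcc Set.left_mem_uIcc hv
    have hder : ∀ u ∈ uIcc (0:ℝ) v,
        HasDerivWithinAt (fun x : ℝ => s * (s - 1) * (1 + x) ^ (s - 2))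
          (s * (s - 1) * ((s - 2) * (1 + u) ^ (s - 2 - 1))) (uIcc (0:ℝ) v) u := by
      intro u hu
      have h := (hmem u (hsub hu)).2.1
      exact ((hasDerivAt_one_add_rpow (s - 2) (by linarith)).const_mul
        (s * (s - 1))).hasDerivWithinAt
    have hbd : ∀ u ∈ uIcc (0:ℝ) v,
        ‖s * (s - 1) * ((s - 2) * (1 + u) ^ (s - 2 - 1))‖ ≤ K := by
      intro u hu
      exact hf3 u (hmem u (hsub hu)).2.1 (hmem u (hsub hu)).2.2
    have := (convex_uIcc (0:ℝ) v).norm_image_sub_le_of_norm_hasDerivWithin_le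
      hder hbd Set.left_mem_uIcc Set.right_mem_uIcc
    simpa [Real.one_rpow] using this
  have lvl1 : ∀ v ∈ uIcc (0:ℝ) t,
      |s * (1 + v) ^ (s - 1) - (s + s * (s - 1) * v)| ≤ K * |t| * |v| := by
    intro v hv
    have hsub : uIcc (0:ℝ) v ⊆ uIcc (0:ℝ) t :=
      Set.uIcc_subset_uIcc Set.left_mem_uIcc hv
    have hder : ∀ u ∈ uIcc (0:ℝ) v,
        HasDerivWithinAt (fun x : ℝ => s * (1 + x) ^ (s - 1) - (s + s * (s - 1) * x))
          (s * (s - 1) * (1 + u) ^ (s - 2) - s * (s - 1)) (uIcc (0:ℝ) v) u := by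
      intro u hu
      have h := (hmem u (hsub hu)).2.1
      have h1 := (hasDerivAt_one_add_rpow (s - 1) (by linarith : (0:ℝ) < 1 + u)).const_mul s
      have h2 : HasDerivAt (fun x : ℝ => s + s * (s - 1) * x) (s * (s - 1)) u := by
        simpa using ((hasDerivAt_id u).const_mul (s * (s - 1))).const_add s
      have h3 := h1.sub h2
      rw [show s - 1 - 1 = s - 2 by ring] at h3
      have he : s * ((s - 1) * (1 + u) ^ (s - 2)) - s * (s - 1)
          = s * (s - 1) * (1 + u) ^ (s - 2) - s * (s - 1) := by ring
      rw [he] at h3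
      exact h3.hasDerivWithinAt
    have hbd : ∀ u ∈ uIcc (0:ℝ) v,
        ‖s * (s - 1) * (1 + u) ^ (s - 2) - s * (s - 1)‖ ≤ K * |t| := by
      intro u hu
      exact le_trans (lvl2 u (hsub hu))
        (mul_le_mul_of_nonneg_left (hmem u (hsub hu)).1 hKpos.le)
    have := (convex_uIcc (0:ℝ) v).norm_image_sub_le_of_norm_hasDerivWithin_le
      hder hbd Set.left_mem_uIcc Set.right_mem_uIcc
    simpa [Real.one_rpow] using this
  have hder : ∀ u ∈ uIcc (0:ℝ) t,
      HasDerivWithinAt (fun x : ℝ => (1 + x) ^ s - 1 - s * x - s * (s - 1) / 2 * x ^ 2)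
        (s * (1 + u) ^ (s - 1) - (s + s * (s - 1) * u)) (uIcc (0:ℝ) t) u := by
    intro u hu
    have h := (hmem u hu).2.1
    have h1 := ((hasDerivAt_one_add_rpow s (by linarith : (0:ℝ) < 1 + u)).sub_const 1).sub
      ((hasDerivAt_id u).const_mul s)
    have h2 := h1.sub ((hasDerivAt_pow 2 u).const_mul (s * (s - 1) / 2))
    have he : s * (1 + u) ^ (s - 1) - s * 1 - s * (s - 1) / 2 * (↑2 * u ^ (2 - 1))
        = s * (1 + u) ^ (s - 1) - (s + s * (s - 1) * u) := by norm_num; ring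
    have h3 : HasDerivAt (fun x : ℝ => (1 + x) ^ s - 1 - s * x - s * (s - 1) / 2 * x ^ 2)
        (s * (1 + u) ^ (s - 1) - (s + s * (s - 1) * u)) u := by
      exact h2.congr_deriv (by norm_num <;> ring)
    exact h3.hasDerivWithinAt
  have hbd : ∀ u ∈ uIcc (0:ℝ) t,
      ‖s * (1 + u) ^ (s - 1) - (s + s * (s - 1) * u)‖ ≤ K * |t| * |t| := by
    intro u hu
    exact le_trans (lvl1 u hu)
      (mul_le_mul_of_nonneg_left (hmem u hu).1 (by positivity))
  have hfin := (convex_uIcc (0:ℝ) t).norm_image_sub_le_of_norm_hasDerivWithin_le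
    hder hbd Set.left_mem_uIcc Set.right_mem_uIcc
  have e : ((1:ℝ) + 0) ^ s - 1 - s * 0 - s * (s - 1) / 2 * 0 ^ 2 = 0 := by
    norm_num
  rw [e, sub_zero, sub_zero, Real.norm_eq_abs, Real.norm_eq_abs] at hfin
  calc |(1 + t) ^ s - 1 - s * t - s * (s - 1) / 2 * t ^ 2|
      ≤ K * |t| * |t| * |t| := hfin
    _ = K * |t| ^ 3 := by ring

lemma phi_bound {s : ℝ} (hs : 2 < s) :
    ∃ K > 0, ∀ ε y : ℝ, 0 < ε → |ε ^ 2 * y| ≤ 1 / 2 →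
      |ε ^ 4 * phiP s ε y| ≤ K * ε ^ 2 * |y| ^ 3 := by
  obtain ⟨K₁, hK₁, hT⟩ := rpow_taylor3 hs
  have hs0 : (0:ℝ) < s := by linarith
  have hc : (0:ℝ) < K₁ / s + (s - 2) * (s - 1) / 6 := by
    have h1 := div_pos hK₁ hs0
    nlinarith
  refine ⟨K₁ / s + (s - 2) * (s - 1) / 6, hc, fun ε y hε hty => ?_⟩
  have hε2 : (0:ℝ) < ε ^ 2 := by positivity
  have hε4 : (0:ℝ) < ε ^ 4 := by positivity
  set R : ℝ := (1 + ε ^ 2 * y) ^ s - 1 - s * (ε ^ 2 * y) - s * (s - 1) / 2 * (ε ^ 2 * y) ^ 2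
    with hR
  have hX : ε ^ 4 * phiP s ε y
      = (R / s - (s - 2) * (s - 1) / 6 * (ε ^ 2 * y) ^ 3) / ε ^ 4 := by
    rw [phiP, Wpot, hR]
    field_simp
    ring
  have hRb : |R| ≤ K₁ * |ε ^ 2 * y| ^ 3 := hT _ hty
  have habs : |ε ^ 2 * y| ^ 3 = ε ^ 6 * |y| ^ 3 := by
    rw [abs_mul, abs_of_nonneg hε2.le, mul_pow]; ring_nf
  rw [hX, abs_div, abs_of_nonneg hε4.le]
  rw [div_le_iff₀ hε4]
  calc |R / s - (s - 2) * (s - 1) / 6 * (ε ^ 2 * y) ^ 3|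
      ≤ |R| / s + (s - 2) * (s - 1) / 6 * |ε ^ 2 * y| ^ 3 := by
        refine le_trans (abs_sub _ _) ?_
        rw [abs_div, abs_of_nonneg hs0.le]
        gcongr
        rw [abs_mul, abs_of_nonneg (by nlinarith : (0:ℝ) ≤ (s-2)*(s-1)/6), abs_pow]
    _ ≤ K₁ * (ε ^ 6 * |y| ^ 3) / s + (s - 2) * (s - 1) / 6 * (ε ^ 6 * |y| ^ 3) := by
        rw [← habs]
        gcongr
    _ = (K₁ / s + (s - 2) * (s - 1) / 6) * ε ^ 2 * |y| ^ 3 * ε ^ 4 := by ring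

lemma alphaP_sq {s Ω₀ : ℝ} (hs : 2 < s) : alphaP s Ω₀ ^ 2 = Ω₀ ^ 2 * (s + 2) := by
  rw [alphaP, mul_pow, Real.sq_sqrt (by linarith : (0:ℝ) ≤ s + 2)]

lemma Ubeta_lower {s Ω₀ : ℝ} (hs : 2 < s) (hΩ : 0 < Ω₀) {ε β y : ℝ}
    (hw : |ε ^ 2 * y| ≤ (s - 2) / 10) (hw2 : |ε ^ 2 * y| ≤ 1 / 2) :
    Ω₀ ^ 2 * (s - 2) / 9 * y ^ 2 ≤ Ubeta s Ω₀ ε β y := by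
  obtain ⟨hwl, hwr⟩ := abs_le.mp hw
  obtain ⟨hw2l, hw2r⟩ := abs_le.mp hw2
  have hden : (0:ℝ) < (1 + ε ^ 2 * y) ^ 2 := by nlinarith
  rw [Ubeta, le_div_iff₀ hden, alphaP_sq hs]
  have hsq : (0:ℝ) ≤ (Ω₀ * (2 + ε ^ 2 * y) * y - ε ^ 2 * β) ^ 2 := sq_nonneg _
  have hid : Ω₀ ^ 2 * (s + 2) / 2 * y ^ 2 - 2 * Ω₀ * ε ^ 2 * β * y - Ω₀ * ε ^ 4 * β * y ^ 2
      + 1 / 2 * ε ^ 4 * β ^ 2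
      = (Ω₀ * (2 + ε ^ 2 * y) * y - ε ^ 2 * β) ^ 2 / 2
        + Ω₀ ^ 2 * (s + 2 - (2 + ε ^ 2 * y) ^ 2) / 2 * y ^ 2 := by ring
  rw [hid]
  have h1 : (1 + ε ^ 2 * y) ^ 2 ≤ 9 / 4 := by nlinarith
  have hq : (2 + ε ^ 2 * y) ^ 2 ≤ 4 + (s - 2) / 2 := by
    have hsq2 : (ε ^ 2 * y) ^ 2 ≤ (1 / 2) * ((s - 2) / 10) := by
      calc (ε ^ 2 * y) ^ 2 = |ε ^ 2 * y| * |ε ^ 2 * y| := by rw [← abs_mul, abs_mul_self, sq]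
        _ ≤ (1 / 2) * ((s - 2) / 10) := by
            apply mul_le_mul hw2 hw (abs_nonneg _) (by norm_num)
    nlinarith
  have h2' : (s - 2) / 2 ≤ s + 2 - (2 + ε ^ 2 * y) ^ 2 := by linarith
  have hy2 : (0:ℝ) ≤ y ^ 2 := sq_nonneg y
  have hm : (0:ℝ) ≤ Ω₀ ^ 2 * (s - 2) / 9 * y ^ 2 := by
    have : (0:ℝ) ≤ Ω₀ ^ 2 * (s - 2) := by nlinarith [sq_nonneg Ω₀]
    nlinarith
  have P1 : Ω₀ ^ 2 * (s - 2) / 9 * y ^ 2 * (1 + ε ^ 2 * y) ^ 2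
      ≤ Ω₀ ^ 2 * (s - 2) / 9 * y ^ 2 * (9 / 4) := mul_le_mul_of_nonneg_left h1 hm
  have P2 : Ω₀ ^ 2 * ((s - 2) / 2) * y ^ 2 ≤ Ω₀ ^ 2 * (s + 2 - (2 + ε ^ 2 * y) ^ 2) * y ^ 2 :=
    mul_le_mul_of_nonneg_right (mul_le_mul_of_nonneg_left h2' (sq_nonneg Ω₀)) hy2
  linarith [hsq, P1, P2]

lemma Ubeta_abs_le {s Ω₀ B : ℝ} (hs : 2 < s) (hΩ : 0 < Ω₀) (hB : 0 < B) {ε β y : ℝ}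
    (hε : 0 < ε) (hε1 : ε ≤ 1) (hβ : ε ^ 2 * |β| ≤ B) (hw2 : |ε ^ 2 * y| ≤ 1 / 2) :
    |Ubeta s Ω₀ ε β y| ≤ 4 * (Ω₀ ^ 2 * (s + 2) / 2 + 3 * Ω₀ * B + B ^ 2 / 2) * (1 + y ^ 2) := by
  obtain ⟨hw2l, hw2r⟩ := abs_le.mp hw2
  have hden : (1:ℝ) / 4 ≤ (1 + ε ^ 2 * y) ^ 2 := by nlinarith
  have hdenpos : (0:ℝ) < (1 + ε ^ 2 * y) ^ 2 := by linarith
  have hyabs : |y| ≤ 1 + y ^ 2 := by nlinarith [sq_nonneg (|y| - 1), sq_abs y, abs_nonneg y]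
  have hε2 : ε ^ 2 ≤ 1 := by nlinarith
  set C₁ : ℝ := Ω₀ ^ 2 * (s + 2) / 2 + 3 * Ω₀ * B + B ^ 2 / 2 with hC₁
  have hC₁pos : 0 < C₁ := by rw [hC₁]; positivity
  have he4 : ε ^ 4 * |β| ≤ B := by
    calc ε ^ 4 * |β| = ε ^ 2 * (ε ^ 2 * |β|) := by ring
      _ ≤ 1 * B := mul_le_mul hε2 hβ (by positivity) zero_le_one
      _ = B := one_mul B
  have t1 : |alphaP s Ω₀ ^ 2 / 2 * y ^ 2| ≤ Ω₀ ^ 2 * (s + 2) / 2 * (1 + y ^ 2) := by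
    rw [alphaP_sq hs, abs_of_nonneg (by positivity)]
    linarith [mul_nonneg (mul_nonneg (sq_nonneg Ω₀) (by linarith : (0:ℝ) ≤ s + 2)) (sq_nonneg y), mul_nonneg (sq_nonneg Ω₀) (by linarith : (0:ℝ) ≤ s + 2)]
  have t2 : |2 * Ω₀ * ε ^ 2 * β * y| ≤ 2 * Ω₀ * B * (1 + y ^ 2) := by
    have habs : |2 * Ω₀ * ε ^ 2 * β * y| = 2 * Ω₀ * ε ^ 2 * |β| * |y| := by
      rw [abs_mul, abs_mul, abs_of_nonneg (by positivity : (0:ℝ) ≤ 2 * Ω₀ * ε ^ 2)]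
    rw [habs]
    have s1 : 2 * Ω₀ * ε ^ 2 * |β| * |y| ≤ 2 * Ω₀ * B * |y| := by
      apply mul_le_mul_of_nonneg_right _ (abs_nonneg y)
      calc 2 * Ω₀ * ε ^ 2 * |β| = 2 * Ω₀ * (ε ^ 2 * |β|) := by ring
        _ ≤ 2 * Ω₀ * B := mul_le_mul_of_nonneg_left hβ (by positivity)
    have s2 : 2 * Ω₀ * B * |y| ≤ 2 * Ω₀ * B * (1 + y ^ 2) :=
      mul_le_mul_of_nonneg_left hyabs (by positivity)
    linarith
  have t3 : |Ω₀ * ε ^ 4 * β * y ^ 2| ≤ Ω₀ * B * (1 + y ^ 2) := by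
    have habs : |Ω₀ * ε ^ 4 * β * y ^ 2| = Ω₀ * ε ^ 4 * |β| * y ^ 2 := by
      rw [abs_mul, abs_mul, abs_of_nonneg (by positivity : (0:ℝ) ≤ Ω₀ * ε ^ 4),
        abs_of_nonneg (sq_nonneg y)]
    rw [habs]
    have s1 : Ω₀ * ε ^ 4 * |β| * y ^ 2 ≤ Ω₀ * B * y ^ 2 := by
      apply mul_le_mul_of_nonneg_right _ (sq_nonneg y)
      calc Ω₀ * ε ^ 4 * |β| = Ω₀ * (ε ^ 4 * |β|) := by ring
        _ ≤ Ω₀ * B := mul_le_mul_of_nonneg_left he4 hΩ.le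
    linarith [s1, (mul_pos hΩ hB).le]
  have t4 : |1 / 2 * ε ^ 4 * β ^ 2| ≤ B ^ 2 / 2 * (1 + y ^ 2) := by
    have habs : |1 / 2 * ε ^ 4 * β ^ 2| = (ε ^ 2 * |β|) ^ 2 / 2 := by
      rw [abs_of_nonneg (by positivity)]
      rw [show (ε ^ 2 * |β|) ^ 2 = ε ^ 4 * |β| ^ 2 by ring, sq_abs]
      ring
    rw [habs]
    have s1 : (ε ^ 2 * |β|) ^ 2 ≤ B ^ 2 := pow_le_pow_left₀ (by positivity) hβ 2
    linarith [s1, mul_nonneg (sq_nonneg B) (sq_nonneg y)]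
  have hN : |alphaP s Ω₀ ^ 2 / 2 * y ^ 2 - 2 * Ω₀ * ε ^ 2 * β * y - Ω₀ * ε ^ 4 * β * y ^ 2
      + 1 / 2 * ε ^ 4 * β ^ 2| ≤ C₁ * (1 + y ^ 2) := by
    have a1 := neg_abs_le (alphaP s Ω₀ ^ 2 / 2 * y ^ 2); have b1 := le_abs_self (alphaP s Ω₀ ^ 2 / 2 * y ^ 2)
    have a2 := neg_abs_le (2 * Ω₀ * ε ^ 2 * β * y); have b2 := le_abs_self (2 * Ω₀ * ε ^ 2 * β * y)
    have a3 := neg_abs_le (Ω₀ * ε ^ 4 * β * y ^ 2); have b3 := le_abs_self (Ω₀ * ε ^ 4 * β * y ^ 2)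
    have a4 := neg_abs_le (1 / 2 * ε ^ 4 * β ^ 2); have b4 := le_abs_self (1 / 2 * ε ^ 4 * β ^ 2)
    rw [abs_le, hC₁]
    constructor <;> linarith
  rw [Ubeta, abs_div, abs_of_nonneg hdenpos.le, div_le_iff₀ hdenpos]
  have h0 : (0:ℝ) ≤ 4 * C₁ * (1 + y ^ 2) := by positivity
  have hfin : C₁ * (1 + y ^ 2) ≤ 4 * C₁ * (1 + y ^ 2) * (1 + ε ^ 2 * y) ^ 2 := by
    rw [show C₁ * (1 + y ^ 2) = 4 * C₁ * (1 + y ^ 2) * (1 / 4) by ring]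
    exact mul_le_mul_of_nonneg_left hden h0
  exact le_trans hN hfin

lemma measurable_vP {s Ω₀ ε : ℝ} (hs : 2 < s) : Measurable (vP s Ω₀ ε) := by
  have hc : Continuous fun y : ℝ => (1 + ε ^ 2 * y) ^ s :=
    (Real.continuous_rpow_const (by linarith : (0:ℝ) ≤ s)).comp (by continuity)
  unfold vP phiP Wpot
  refine ((Measurable.div ?_ ?_).add measurable_const).add (Measurable.div ?_ ?_)
  · exact (continuous_const.mul (by continuity)).measurable
  · exact ((by continuity : Continuous fun y : ℝ => (1 + ε ^ 2 * y) ^ 2)).measurable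
  · refine measurable_const.mul (Measurable.div ?_ measurable_const)
    refine Measurable.sub (Measurable.sub ?_ ?_) ?_
    · exact (measurable_const.mul (hc.measurable.sub measurable_const))
    · exact ((by continuity : Continuous fun y : ℝ =>
        1 / 2 * ((1 + ε ^ 2 * y) ^ 2 - 1))).measurable
    · exact ((by continuity : Continuous fun y : ℝ =>
        (s - 2) / 2 * ε ^ 4 * y ^ 2 + (s - 2) * (s - 1) / 6 * ε ^ 6 * y ^ 3)).measurable
  · exact (measurable_id.pow_const 3)

lemma vterm_abs_le {s Ω₀ Kφ : ℝ} (hs : 2 < s) (hΩ : 0 < Ω₀) (hKφ : 0 < Kφ)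
    (hφ : ∀ ε y : ℝ, 0 < ε → |ε ^ 2 * y| ≤ 1 / 2 → |ε ^ 4 * phiP s ε y| ≤ Kφ * ε ^ 2 * |y| ^ 3)
    {ε y η : ℝ} (hε : 0 < ε) (hyη : |y| ≤ η) (hw2 : |ε ^ 2 * y| ≤ 1 / 2) :
    |ε ^ 2 * y ^ 3 * vP s Ω₀ ε y|
      ≤ (8 * s * Ω₀ ^ 2 + (s - 1) * (s - 2) * Ω₀ ^ 2 / 6 + Ω₀ ^ 2 * Kφ) * (ε ^ 2 * η) * y ^ 2 := by
  have hs0 : (0:ℝ) < s := by linarith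
  have hη0 : 0 ≤ η := le_trans (abs_nonneg y) hyη
  by_cases hy : y = 0
  · subst hy; norm_num
  have hy3 : y ^ 3 ≠ 0 := pow_ne_zero 3 hy
  obtain ⟨hw2l, hw2r⟩ := abs_le.mp hw2
  have hden : (1:ℝ) / 4 ≤ (1 + ε ^ 2 * y) ^ 2 := by nlinarith
  have hdenpos : (0:ℝ) < (1 + ε ^ 2 * y) ^ 2 := by linarith
  have key : ε ^ 2 * y ^ 3 * vP s Ω₀ ε y
      = ε ^ 2 * y ^ 3 * (Ω₀ ^ 2 * (s + (s - 1) * ε ^ 2 * y) / (1 + ε ^ 2 * y) ^ 2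
          + (s - 1) * (s - 2) * Ω₀ ^ 2 / 6)
        + Ω₀ ^ 2 * (ε ^ 4 * phiP s ε y) := by
    rw [vP]; field_simp
  rw [key]
  have hv1 : |Ω₀ ^ 2 * (s + (s - 1) * ε ^ 2 * y) / (1 + ε ^ 2 * y) ^ 2| ≤ 8 * s * Ω₀ ^ 2 := by
    rw [abs_div, abs_of_nonneg hdenpos.le, div_le_iff₀ hdenpos]
    have hnum : |Ω₀ ^ 2 * (s + (s - 1) * ε ^ 2 * y)| ≤ Ω₀ ^ 2 * (2 * s) := by
      rw [abs_mul, abs_of_nonneg (sq_nonneg Ω₀)]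
      apply mul_le_mul_of_nonneg_left _ (sq_nonneg Ω₀)
      have h1 : |s + (s - 1) * ε ^ 2 * y| ≤ |s| + |s - 1| * |ε ^ 2 * y| := by
        calc |s + (s - 1) * ε ^ 2 * y| ≤ |s| + |(s - 1) * ε ^ 2 * y| := abs_add_le _ _
          _ = |s| + |s - 1| * |ε ^ 2 * y| := by
              rw [show (s - 1) * ε ^ 2 * y = (s - 1) * (ε ^ 2 * y) by ring, abs_mul]
      have h2 : |s| = s := abs_of_nonneg hs0.le
      have h3 : |s - 1| = s - 1 := abs_of_nonneg (by linarith)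
      rw [h2, h3] at h1
      have : (s - 1) * |ε ^ 2 * y| ≤ (s - 1) * (1 / 2) :=
        mul_le_mul_of_nonneg_left hw2 (by linarith)
      linarith
    have hg : 8 * s * Ω₀ ^ 2 * (1 / 4) ≤ 8 * s * Ω₀ ^ 2 * (1 + ε ^ 2 * y) ^ 2 := by
      apply mul_le_mul_of_nonneg_left hden
      exact mul_nonneg (by linarith) (sq_nonneg Ω₀)
    calc |Ω₀ ^ 2 * (s + (s - 1) * ε ^ 2 * y)| ≤ Ω₀ ^ 2 * (2 * s) := hnum
      _ = 8 * s * Ω₀ ^ 2 * (1 / 4) := by ring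
      _ ≤ _ := hg
  have hc2 : |(s - 1) * (s - 2) * Ω₀ ^ 2 / 6| = (s - 1) * (s - 2) * Ω₀ ^ 2 / 6 := by
    apply abs_of_nonneg
    have : (0:ℝ) ≤ (s - 1) * (s - 2) := by nlinarith
    positivity
  have hcube : ε ^ 2 * |y| ^ 3 ≤ ε ^ 2 * η * y ^ 2 := by
    have : |y| ^ 3 = |y| * y ^ 2 := by rw [pow_succ, sq_abs, sq]; ring
    rw [this]
    calc ε ^ 2 * (|y| * y ^ 2) ≤ ε ^ 2 * (η * y ^ 2) := by
          apply mul_le_mul_of_nonneg_left _ (sq_nonneg ε)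
          exact mul_le_mul_of_nonneg_right hyη (sq_nonneg y)
      _ = ε ^ 2 * η * y ^ 2 := by ring
  have hA : |ε ^ 2 * y ^ 3 * (Ω₀ ^ 2 * (s + (s - 1) * ε ^ 2 * y) / (1 + ε ^ 2 * y) ^ 2
      + (s - 1) * (s - 2) * Ω₀ ^ 2 / 6)|
      ≤ (8 * s * Ω₀ ^ 2 + (s - 1) * (s - 2) * Ω₀ ^ 2 / 6) * (ε ^ 2 * η * y ^ 2) := by
    rw [abs_mul]
    have e1 : |ε ^ 2 * y ^ 3| = ε ^ 2 * |y| ^ 3 := by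
      rw [abs_mul, abs_of_nonneg (sq_nonneg ε), abs_pow]
    have e2 : |Ω₀ ^ 2 * (s + (s - 1) * ε ^ 2 * y) / (1 + ε ^ 2 * y) ^ 2
        + (s - 1) * (s - 2) * Ω₀ ^ 2 / 6|
        ≤ 8 * s * Ω₀ ^ 2 + (s - 1) * (s - 2) * Ω₀ ^ 2 / 6 := by
      calc _ ≤ |Ω₀ ^ 2 * (s + (s - 1) * ε ^ 2 * y) / (1 + ε ^ 2 * y) ^ 2|
            + |(s - 1) * (s - 2) * Ω₀ ^ 2 / 6| := abs_add_le _ _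
        _ ≤ _ := by rw [hc2]; linarith
    rw [e1]
    calc ε ^ 2 * |y| ^ 3 * |_ + _| ≤ ε ^ 2 * |y| ^ 3
          * (8 * s * Ω₀ ^ 2 + (s - 1) * (s - 2) * Ω₀ ^ 2 / 6) := by
          apply mul_le_mul_of_nonneg_left e2 (by positivity)
      _ ≤ ε ^ 2 * η * y ^ 2 * (8 * s * Ω₀ ^ 2 + (s - 1) * (s - 2) * Ω₀ ^ 2 / 6) := by
          apply mul_le_mul_of_nonneg_right hcube
          have h1 : (0:ℝ) ≤ (s - 1) * (s - 2) := by nlinarith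
          have h2 : (0:ℝ) ≤ 8 * s * Ω₀ ^ 2 := by positivity
          positivity
      _ = _ := by ring
  have hB : |Ω₀ ^ 2 * (ε ^ 4 * phiP s ε y)| ≤ Ω₀ ^ 2 * Kφ * (ε ^ 2 * η * y ^ 2) := by
    rw [abs_mul, abs_of_nonneg (sq_nonneg Ω₀)]
    calc Ω₀ ^ 2 * |ε ^ 4 * phiP s ε y| ≤ Ω₀ ^ 2 * (Kφ * ε ^ 2 * |y| ^ 3) :=
          mul_le_mul_of_nonneg_left (hφ ε y hε hw2) (sq_nonneg Ω₀)
      _ = Ω₀ ^ 2 * Kφ * (ε ^ 2 * |y| ^ 3) := by ring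
      _ ≤ Ω₀ ^ 2 * Kφ * (ε ^ 2 * η * y ^ 2) :=
          mul_le_mul_of_nonneg_left hcube (by positivity)
  calc |_ + _| ≤ _ + _ := abs_add_le _ _
    _ ≤ (8 * s * Ω₀ ^ 2 + (s - 1) * (s - 2) * Ω₀ ^ 2 / 6) * (ε ^ 2 * η * y ^ 2)
        + Ω₀ ^ 2 * Kφ * (ε ^ 2 * η * y ^ 2) := add_le_add hA hB
    _ = _ := by ring

lemma measurable_Ubeta {s Ω₀ ε β : ℝ} : Measurable (Ubeta s Ω₀ ε β) := by
  unfold Ubeta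
  exact ((by continuity : Continuous fun y : ℝ => (alphaP s Ω₀) ^ 2 / 2 * y ^ 2
      - 2 * Ω₀ * ε ^ 2 * β * y - Ω₀ * ε ^ 4 * β * y ^ 2
      + 1 / 2 * ε ^ 4 * β ^ 2).measurable).div
    ((by continuity : Continuous fun y : ℝ => (1 + ε ^ 2 * y) ^ 2).measurable)

lemma aux_mul_sq_le {x b c : ℝ} (hxc : |x| ≤ c) (hb0 : 0 ≤ b) (hb1 : b ≤ 1) : x * b ≤ c :=
  calc x * b ≤ |x| * b := mul_le_mul_of_nonneg_right (le_abs_self x) hb0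
    _ ≤ c * 1 := mul_le_mul hxc hb1 hb0 ((abs_nonneg x).trans hxc)
    _ = c := mul_one c

lemma aux_four_le_eight {c y : ℝ} (hc : 0 ≤ c) (hy2 : y ^ 2 ≤ 1) :
    4 * c * (1 + y ^ 2) ≤ 8 * c := by nlinarith

end Helpers

/-- preliminary bounds on `E^gv_β` and `μ_β`: uniformly for `|β| ≤ B ε^{−2}`
and `ε` small, `0 ≤ E^gv_β ≤ C`, `E^gv_β ≤ μ_β ≤ 2 E^gv_β` and hence `μ_β ≤ 2C`. -/
theorem beta_energy_chemPot_preliminary_bounds (s Ω₀ η₀ : ℝ)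
    (hs : 2 < s) (hΩ : 0 < Ω₀) (hη : 0 < η₀) :
    ∀ B : ℝ, 0 < B →
      ∃ C : ℝ, 0 < C ∧ ∃ ε₀ : ℝ, 0 < ε₀ ∧
        ∀ ε : ℝ, 0 < ε → ε < ε₀ → ∀ β : ℝ, |β| ≤ B / ε ^ 2 →
          0 ≤ betaEnergy s Ω₀ η₀ ε β ∧
          betaEnergy s Ω₀ η₀ ε β ≤ C ∧
          ∀ g : ℝ → ℝ, betaIsMinimizer s Ω₀ η₀ ε β g →
            betaEnergy s Ω₀ η₀ ε β ≤ betaChemPot s Ω₀ η₀ ε β g ∧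
            betaChemPot s Ω₀ η₀ ε β g ≤ 2 * betaEnergy s Ω₀ η₀ ε β ∧
            betaChemPot s Ω₀ η₀ ε β g ≤ 2 * C := by
  intro B hB
  obtain ⟨Kφ, hKφ, hφ⟩ := phi_bound hs
  -- constants
  set m : ℝ := Ω₀ ^ 2 * (s - 2) / 9 with hm_def
  have hm : 0 < m := by
    have : (0:ℝ) < Ω₀ ^ 2 * (s - 2) := by
      apply mul_pos (by positivity); linarith
    rw [hm_def]; linarith
  set D : ℝ := 8 * s * Ω₀ ^ 2 + (s - 1) * (s - 2) * Ω₀ ^ 2 / 6 + Ω₀ ^ 2 * Kφ with hD_def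
  have hD : 0 < D := by
    have h1 : (0:ℝ) < 8 * s * Ω₀ ^ 2 := by
      apply mul_pos (by linarith) (by positivity)
    have h2 : (0:ℝ) ≤ (s - 1) * (s - 2) * Ω₀ ^ 2 / 6 := by
      apply div_nonneg _ (by norm_num)
      apply mul_nonneg (by nlinarith) (sq_nonneg Ω₀)
    have h3 : (0:ℝ) < Ω₀ ^ 2 * Kφ := by positivity
    rw [hD_def]; linarith
  set δ₀ : ℝ := min (min (1 / 2) ((s - 2) / 10)) (m / (D + 1)) with hδ₀_def
  have hδ₀ : 0 < δ₀ := by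
    rw [hδ₀_def]
    apply lt_min (lt_min (by norm_num) (by linarith))
    positivity
  have hδ₀_half : δ₀ ≤ 1 / 2 := le_trans (min_le_left _ _) (min_le_left _ _)
  have hδ₀_s : δ₀ ≤ (s - 2) / 10 := le_trans (min_le_left _ _) (min_le_right _ _)
  have hδ₀_m : δ₀ ≤ m / (D + 1) := min_le_right _ _
  set C₁ : ℝ := Ω₀ ^ 2 * (s + 2) / 2 + 3 * Ω₀ * B + B ^ 2 / 2 with hC₁_def
  have hC₁ : 0 < C₁ := by rw [hC₁_def]; positivity
  set M : ℝ := (3 / 2) * (8 * C₁ + m + 1) with hM_def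
  have hM : 0 < M := by rw [hM_def]; positivity
  refine ⟨M, hM, ?_⟩
  set cη : ℝ := η₀ / (2 * Real.sqrt Ω₀) with hcη_def
  have hcη : 0 < cη := by
    rw [hcη_def]; positivity
  refine ⟨min 1 (min (Real.exp (-(1 / cη))) (δ₀ / cη)), by positivity, ?_⟩
  intro ε hε hε₀ β hβ
  have hε1 : ε < 1 := lt_of_lt_of_le hε₀ (min_le_left _ _)
  have hεexp : ε < Real.exp (-(1 / cη)) :=
    lt_of_lt_of_le hε₀ (le_trans (min_le_right _ _) (min_le_left _ _))
  have hεδ : ε ≤ δ₀ / cη :=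
    le_of_lt (lt_of_lt_of_le hε₀ (le_trans (min_le_right _ _) (min_le_right _ _)))
  set η : ℝ := etaP Ω₀ η₀ ε with hη_def
  have hlogabs : |Real.log ε| = -Real.log ε := by
    rw [abs_of_nonpos (Real.log_nonpos hε.le hε1.le)]
  have hη_eq : η = cη * |Real.log ε| := by rw [hη_def, etaP, hcη_def]
  have hη1 : 1 < η := by
    have hlog : Real.log ε < -(1 / cη) := by
      have := Real.log_lt_log hε hεexp
      rwa [Real.log_exp] at this
    rw [hη_eq, hlogabs]
    calc (1:ℝ) = cη * (1 / cη) := by field_simp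
      _ < cη * (-Real.log ε) := by
          apply mul_lt_mul_of_pos_left _ hcη; linarith
  have hη0 : 0 < η := lt_trans one_pos hη1
  have hδ : ε ^ 2 * η ≤ δ₀ := by
    have hlog1 : ε * |Real.log ε| ≤ 1 := by
      rw [hlogabs]
      have h1 : Real.log ε⁻¹ ≤ ε⁻¹ - 1 := Real.log_le_sub_one_of_pos (by positivity)
      rw [Real.log_inv] at h1
      have h2 : -Real.log ε ≤ ε⁻¹ := by linarith [inv_pos.mpr hε]
      calc ε * -Real.log ε ≤ ε * ε⁻¹ := mul_le_mul_of_nonneg_left h2 hε.le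
        _ = 1 := mul_inv_cancel₀ hε.ne'
    calc ε ^ 2 * η = (cη * ε) * (ε * |Real.log ε|) := by rw [hη_eq]; ring
      _ ≤ (cη * ε) * 1 := by
          apply mul_le_mul_of_nonneg_left hlog1 (by positivity)
      _ = cη * ε := mul_one _
      _ ≤ cη * (δ₀ / cη) := mul_le_mul_of_nonneg_left hεδ hcη.le
      _ = δ₀ := by field_simp
  have hβ' : ε ^ 2 * |β| ≤ B := by
    have h2 : (0:ℝ) < ε ^ 2 := by positivity
    calc ε ^ 2 * |β| ≤ ε ^ 2 * (B / ε ^ 2) := mul_le_mul_of_nonneg_left hβ h2.le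
      _ = B := by field_simp
  -- pointwise facts on the interval
  have hkey : ∀ y ∈ Set.Ioo (-η) η,
      (1 / 2 ≤ 1 + ε ^ 2 * y ∧ 1 + ε ^ 2 * y ≤ 3 / 2)
      ∧ m * y ^ 2 ≤ Ubeta s Ω₀ ε β y
      ∧ |Ubeta s Ω₀ ε β y| ≤ 4 * C₁ * (1 + y ^ 2)
      ∧ |ε ^ 2 * y ^ 3 * vP s Ω₀ ε y| ≤ D * (ε ^ 2 * η) * y ^ 2 := by
    intro y hy
    have hyabs : |y| ≤ η := le_of_lt (abs_lt.mpr ⟨hy.1, hy.2⟩)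
    have hwδ : |ε ^ 2 * y| ≤ δ₀ := by
      rw [abs_mul, abs_of_nonneg (by positivity : (0:ℝ) ≤ ε ^ 2)]
      calc ε ^ 2 * |y| ≤ ε ^ 2 * η := mul_le_mul_of_nonneg_left hyabs (by positivity)
        _ ≤ δ₀ := hδ
    have hw2 : |ε ^ 2 * y| ≤ 1 / 2 := le_trans hwδ hδ₀_half
    have hws : |ε ^ 2 * y| ≤ (s - 2) / 10 := le_trans hwδ hδ₀_s
    obtain ⟨hwl, hwr⟩ := abs_le.mp hw2
    refine ⟨⟨by linarith, by linarith⟩, ?_, ?_, ?_⟩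
    · rw [hm_def]; exact Ubeta_lower hs hΩ hws hw2
    · rw [hC₁_def]; exact Ubeta_abs_le hs hΩ hB hε hε1.le hβ' hw2
    · rw [hD_def]
      calc |ε ^ 2 * y ^ 3 * vP s Ω₀ ε y|
          ≤ (8 * s * Ω₀ ^ 2 + (s - 1) * (s - 2) * Ω₀ ^ 2 / 6 + Ω₀ ^ 2 * Kφ)
            * (ε ^ 2 * η) * y ^ 2 := vterm_abs_le hs hΩ hKφ hφ hε hyabs hw2
        _ = _ := by ring
  have hΦ : ∀ y ∈ Set.Ioo (-η) η,
      0 ≤ Ubeta s Ω₀ ε β y + ε ^ 2 * y ^ 3 * vP s Ω₀ ε y := by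
    intro y hy
    obtain ⟨_, hUlow, _, hvt⟩ := hkey y hy
    have h1 : -(m * y ^ 2) ≤ ε ^ 2 * y ^ 3 * vP s Ω₀ ε y := by
      have h2 := neg_abs_le (ε ^ 2 * y ^ 3 * vP s Ω₀ ε y)
      have h3 : D * (ε ^ 2 * η) * y ^ 2 ≤ m * y ^ 2 := by
        apply mul_le_mul_of_nonneg_right _ (sq_nonneg y)
        calc D * (ε ^ 2 * η) ≤ D * (m / (D + 1)) :=
              mul_le_mul_of_nonneg_left (le_trans hδ hδ₀_m) hD.le
          _ ≤ m := by
              rw [div_eq_inv_mul, ← mul_assoc]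
              have : D * (D + 1)⁻¹ ≤ 1 := by
                rw [mul_inv_le_iff₀ (by linarith)]; linarith
              nlinarith
      linarith
    linarith
  -- pointwise nonnegativity of the integrand
  have hFnn : ∀ (g : ℝ → ℝ), ∀ y ∈ Set.Ioo (-η) η,
      0 ≤ (1 + ε ^ 2 * y) *
        (1 / 2 * (deriv g y) ^ 2 + Ubeta s Ω₀ ε β y * (g y) ^ 2
          + ε ^ 2 * y ^ 3 * vP s Ω₀ ε y * (g y) ^ 2 + 1 / (2 * π) * (g y) ^ 4) := by
    intro g y hy
    obtain ⟨⟨h12, _⟩, _, _, _⟩ := hkey y hy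
    have h2 := mul_nonneg (hΦ y hy) (sq_nonneg (g y))
    have h1 : (0:ℝ) ≤ 1 / 2 * (deriv g y) ^ 2 := by positivity
    have h3 : (0:ℝ) ≤ 1 / (2 * π) * (g y) ^ 4 := by positivity
    apply mul_nonneg (by linarith)
    nlinarith [h1, h2, h3]
  have hfunc_nonneg : ∀ g : ℝ → ℝ, 0 ≤ betaFunctional s Ω₀ η₀ ε β g := by
    intro g
    rw [betaFunctional, ← hη_def]
    exact setIntegral_nonneg measurableSet_Ioo (hFnn g)
  have hbdd : BddBelow (betaFunctional s Ω₀ η₀ ε β '' {g | betaDomain Ω₀ η₀ ε g}) := by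
    refine ⟨0, ?_⟩
    rintro x ⟨g, _, rfl⟩
    exact hfunc_nonneg g
  have hE_nonneg : 0 ≤ betaEnergy s Ω₀ η₀ ε β := by
    rw [betaEnergy]
    apply Real.sInf_nonneg
    rintro x ⟨g, _, rfl⟩
    exact hfunc_nonneg g
  -- the trial function
  have hfinr : IsFiniteMeasure (volume.restrict (Set.Ioo (-η) η)) := by
    constructor
    rw [Measure.restrict_apply_univ]
    exact measure_Ioo_lt_top
  set a : ℝ := Real.sqrt (1 + ε ^ 2 / 2)⁻¹ with ha_def
  have ha2 : a ^ 2 = (1 + ε ^ 2 / 2)⁻¹ := by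
    rw [ha_def]; exact Real.sq_sqrt (by positivity)
  have ha0 : 0 ≤ a := Real.sqrt_nonneg _
  have ha2le : a ^ 2 ≤ 1 := by
    rw [ha2]
    rw [inv_le_one_iff₀]
    right; nlinarith
  set gt : ℝ → ℝ := (Set.Icc (0:ℝ) 1).indicator (fun _ => a) with hgt_def
  have hIccIoo : Set.Icc (0:ℝ) 1 ⊆ Set.Ioo (-η) η := by
    intro x hx
    exact Set.mem_Ioo.mpr ⟨by linarith [hx.1], lt_of_le_of_lt hx.2 hη1⟩
  have hgt_deriv : ∀ y : ℝ, y ≠ 0 → y ≠ 1 → deriv gt y = 0 := by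
    intro y hy0 hy1
    rcases lt_trichotomy y 0 with h | h | h
    · have hev : gt =ᶠ[nhds y] fun _ => (0:ℝ) := by
        filter_upwards [Iio_mem_nhds h] with x hx
        rw [hgt_def]
        exact Set.indicator_of_notMem (fun hmem => absurd hmem.1 (not_le.mpr hx)) _
      rw [hev.deriv_eq, deriv_const]
    · exact absurd h hy0
    rcases lt_trichotomy y 1 with h1 | h1 | h1
    · have hev : gt =ᶠ[nhds y] fun _ => a := by
        filter_upwards [Ioo_mem_nhds h h1] with x hx
        rw [hgt_def]
        exact Set.indicator_of_mem (Set.mem_Icc.mpr ⟨hx.1.le, hx.2.le⟩) _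
      rw [hev.deriv_eq, deriv_const]
    · exact absurd h1 hy1
    · have hev : gt =ᶠ[nhds y] fun _ => (0:ℝ) := by
        filter_upwards [Ioi_mem_nhds h1] with x hx
        rw [hgt_def]
        exact Set.indicator_of_notMem (fun hmem => absurd hmem.2 (not_le.mpr hx)) _
      rw [hev.deriv_eq, deriv_const]
  have hgt_deriv_ae : deriv gt =ᵐ[volume] (fun _ => (0:ℝ)) := by
    have hnull : volume ({0, 1} : Set ℝ) = 0 :=
      (Set.toFinite ({0, 1} : Set ℝ)).measure_zero volume
    rw [Filter.EventuallyEq, ae_iff]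
    apply measure_mono_null _ hnull
    intro y hy
    by_contra hmem
    simp only [Set.mem_insert_iff, Set.mem_singleton_iff] at hmem
    push_neg at hmem
    exact hy (hgt_deriv y hmem.1 hmem.2)
  -- trial function is in the domain
  have hgt_memL2 : MemLp gt 2 (volume.restrict (Set.Ioo (-η) η)) := by
    rw [hgt_def]
    exact memLp_indicator_const 2 measurableSet_Icc a (Or.inr (measure_ne_top _ _))
  have hgt_dmem : MemLp (deriv gt) 2 (volume.restrict (Set.Ioo (-η) η)) := by
    refine MemLp.ae_eq ?_ (MemLp.zero' (p := 2))
    exact ae_restrict_of_ae (hgt_deriv_ae.symm)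
  have hnorm : (∫ y in Set.Ioo (-η) η, (1 + ε ^ 2 * y) * (gt y) ^ 2) = 1 := by
    have hfun : (fun y => (1 + ε ^ 2 * y) * (gt y) ^ 2)
        = fun y => (Set.Icc (0:ℝ) 1).indicator (fun z => (1 + ε ^ 2 * z) * a ^ 2) y := by
      funext y
      by_cases hmem : y ∈ Set.Icc (0:ℝ) 1
      · rw [Set.indicator_of_mem hmem, hgt_def, Set.indicator_of_mem hmem]
      · rw [Set.indicator_of_notMem hmem, hgt_def, Set.indicator_of_notMem hmem]
        ring
    rw [hfun, MeasureTheory.integral_indicator measurableSet_Icc,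
      Measure.restrict_restrict measurableSet_Icc,
      Set.inter_eq_self_of_subset_left hIccIoo,
      MeasureTheory.integral_Icc_eq_integral_Ioc,
      ← intervalIntegral.integral_of_le zero_le_one,
      intervalIntegral.integral_mul_const]
    have hval : (∫ y in (0:ℝ)..1, (1 + ε ^ 2 * y)) = 1 + ε ^ 2 / 2 := by
      rw [intervalIntegral.integral_add intervalIntegrable_const
        ((by fun_prop : Continuous fun y : ℝ => ε ^ 2 * y).intervalIntegrable 0 1),
        intervalIntegral.integral_const, intervalIntegral.integral_const_mul, integral_id]
      norm_num
      ring
    rw [hval, ha2]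
    field_simp
  have hgt_dom : betaDomain Ω₀ η₀ ε gt := ⟨hgt_memL2, hgt_dmem, hnorm⟩
  -- bound on the trial energy
  have hπ : (0:ℝ) < π := Real.pi_pos
  have hπ1 : 1 / (2 * π) ≤ 1 := by
    rw [div_le_one (by positivity)]
    nlinarith [Real.pi_gt_three]
  have hδm : D * (ε ^ 2 * η) ≤ m := by
    calc D * (ε ^ 2 * η) ≤ D * (m / (D + 1)) :=
          mul_le_mul_of_nonneg_left (le_trans hδ hδ₀_m) hD.le
      _ = D * (D + 1)⁻¹ * m := by rw [div_eq_inv_mul]; ring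
      _ ≤ m := by
          apply mul_le_of_le_one_left hm.le
          rw [mul_inv_le_iff₀ (by linarith)]
          linarith
  have htrial : betaFunctional s Ω₀ η₀ ε β gt ≤ M := by
    rw [betaFunctional, ← hη_def]
    have hint : Integrable ((Set.Icc (0:ℝ) 1).indicator fun _ => M)
        (volume.restrict (Set.Ioo (-η) η)) :=
      (integrable_const M).indicator measurableSet_Icc
    have hle : (fun y => (1 + ε ^ 2 * y) *
          (1 / 2 * (deriv gt y) ^ 2 + Ubeta s Ω₀ ε β y * (gt y) ^ 2
            + ε ^ 2 * y ^ 3 * vP s Ω₀ ε y * (gt y) ^ 2 + 1 / (2 * π) * (gt y) ^ 4))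
        ≤ᵐ[volume.restrict (Set.Ioo (-η) η)]
          ((Set.Icc (0:ℝ) 1).indicator fun _ => M) := by
      filter_upwards [ae_restrict_of_ae hgt_deriv_ae, ae_restrict_mem measurableSet_Ioo]
        with y hd hy
      obtain ⟨⟨h12, h32⟩, hUlow, hUup, hvt⟩ := hkey y hy
      by_cases hmem : y ∈ Set.Icc (0:ℝ) 1
      · rw [Set.indicator_of_mem hmem]
        have hgty : gt y = a := by rw [hgt_def]; exact Set.indicator_of_mem hmem _
        rw [hgty, hd]
        have hy2 : y ^ 2 ≤ 1 := by
          rw [sq]; exact mul_le_one₀ hmem.2 hmem.1 hmem.2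
        have hU8 : |Ubeta s Ω₀ ε β y| ≤ 8 * C₁ :=
          le_trans hUup (aux_four_le_eight (by positivity) hy2)
        have hvm : |ε ^ 2 * y ^ 3 * vP s Ω₀ ε y| ≤ m := by
          refine le_trans hvt ?_
          calc D * (ε ^ 2 * η) * y ^ 2 ≤ m * 1 :=
                mul_le_mul hδm hy2 (sq_nonneg y) hm.le
            _ = m := mul_one m
        have p1 : Ubeta s Ω₀ ε β y * a ^ 2 ≤ 8 * C₁ :=
          aux_mul_sq_le hU8 (sq_nonneg a) ha2le
        have p2 : ε ^ 2 * y ^ 3 * vP s Ω₀ ε y * a ^ 2 ≤ m :=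
          aux_mul_sq_le hvm (sq_nonneg a) ha2le
        have ha4 : a ^ 4 ≤ 1 := by
          rw [show a ^ 4 = a ^ 2 * a ^ 2 by ring]
          exact mul_le_one₀ ha2le (sq_nonneg a) ha2le
        have p3 : 1 / (2 * π) * a ^ 4 ≤ 1 :=
          calc 1 / (2 * π) * a ^ 4 ≤ 1 * 1 :=
                mul_le_mul hπ1 ha4 (by positivity) (by norm_num)
            _ = 1 := by norm_num
        have hinner_le : 1 / 2 * (0:ℝ) ^ 2 + Ubeta s Ω₀ ε β y * a ^ 2
            + ε ^ 2 * y ^ 3 * vP s Ω₀ ε y * a ^ 2 + 1 / (2 * π) * a ^ 4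
            ≤ 8 * C₁ + m + 1 := by
          have e : 1 / 2 * (0:ℝ) ^ 2 + Ubeta s Ω₀ ε β y * a ^ 2
              + ε ^ 2 * y ^ 3 * vP s Ω₀ ε y * a ^ 2 + 1 / (2 * π) * a ^ 4
              = Ubeta s Ω₀ ε β y * a ^ 2 + ε ^ 2 * y ^ 3 * vP s Ω₀ ε y * a ^ 2
                + 1 / (2 * π) * a ^ 4 := by ring
          rw [e]
          exact add_le_add (add_le_add p1 p2) p3
        have hinner_nn : (0:ℝ) ≤ 1 / 2 * (0:ℝ) ^ 2 + Ubeta s Ω₀ ε β y * a ^ 2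
            + ε ^ 2 * y ^ 3 * vP s Ω₀ ε y * a ^ 2 + 1 / (2 * π) * a ^ 4 := by
          have h2 := mul_nonneg (hΦ y hy) (sq_nonneg a)
          have h3 : (0:ℝ) ≤ 1 / (2 * π) * a ^ 4 := by positivity
          have e : 1 / 2 * (0:ℝ) ^ 2 + Ubeta s Ω₀ ε β y * a ^ 2
              + ε ^ 2 * y ^ 3 * vP s Ω₀ ε y * a ^ 2 + 1 / (2 * π) * a ^ 4
              = (Ubeta s Ω₀ ε β y + ε ^ 2 * y ^ 3 * vP s Ω₀ ε y) * a ^ 2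
                + 1 / (2 * π) * a ^ 4 := by ring
          rw [e]
          exact add_nonneg h2 h3
        calc (1 + ε ^ 2 * y) * (1 / 2 * (0:ℝ) ^ 2 + Ubeta s Ω₀ ε β y * a ^ 2
              + ε ^ 2 * y ^ 3 * vP s Ω₀ ε y * a ^ 2 + 1 / (2 * π) * a ^ 4)
            ≤ (3 / 2) * (1 / 2 * (0:ℝ) ^ 2 + Ubeta s Ω₀ ε β y * a ^ 2
              + ε ^ 2 * y ^ 3 * vP s Ω₀ ε y * a ^ 2 + 1 / (2 * π) * a ^ 4) :=
              mul_le_mul_of_nonneg_right h32 hinner_nn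
          _ ≤ (3 / 2) * (8 * C₁ + m + 1) :=
              mul_le_mul_of_nonneg_left hinner_le (by norm_num)
          _ = M := by rw [hM_def]
      · rw [Set.indicator_of_notMem hmem]
        have hgty : gt y = 0 := by rw [hgt_def]; exact Set.indicator_of_notMem hmem _
        rw [hgty, hd]
        norm_num
    have h0 : (0 : ℝ → ℝ) ≤ᵐ[volume.restrict (Set.Ioo (-η) η)]
        (fun y => (1 + ε ^ 2 * y) *
          (1 / 2 * (deriv gt y) ^ 2 + Ubeta s Ω₀ ε β y * (gt y) ^ 2
            + ε ^ 2 * y ^ 3 * vP s Ω₀ ε y * (gt y) ^ 2 + 1 / (2 * π) * (gt y) ^ 4)) := by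
      filter_upwards [ae_restrict_mem measurableSet_Ioo] with y hy
      exact hFnn gt y hy
    calc (∫ y in Set.Ioo (-η) η, (1 + ε ^ 2 * y) *
          (1 / 2 * (deriv gt y) ^ 2 + Ubeta s Ω₀ ε β y * (gt y) ^ 2
            + ε ^ 2 * y ^ 3 * vP s Ω₀ ε y * (gt y) ^ 2 + 1 / (2 * π) * (gt y) ^ 4))
        ≤ ∫ y in Set.Ioo (-η) η, ((Set.Icc (0:ℝ) 1).indicator fun _ => M) y :=
          integral_mono_of_nonneg h0 hint hle
      _ = ((volume.restrict (Set.Ioo (-η) η)) (Set.Icc (0:ℝ) 1)).toReal • M :=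
          integral_indicator_const M measurableSet_Icc
      _ = M := by
          rw [Measure.restrict_apply measurableSet_Icc,
            Set.inter_eq_self_of_subset_left hIccIoo, Real.volume_Icc]
          norm_num
  have hE_le : betaEnergy s Ω₀ η₀ ε β ≤ M := by
    rw [betaEnergy]
    exact le_trans (csInf_le hbdd ⟨gt, hgt_dom, rfl⟩) htrial
  refine ⟨hE_nonneg, hE_le, ?_⟩
  intro g hmin
  obtain ⟨hgdom, hgE⟩ := hmin
  obtain ⟨hgL2, hgdL2, _⟩ := hgdom
  have hchem : betaChemPot s Ω₀ η₀ ε β g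
      = betaEnergy s Ω₀ η₀ ε β
        + 1 / (2 * π) * ∫ y in Set.Ioo (-η) η, (1 + ε ^ 2 * y) * (g y) ^ 4 := by
    rw [betaChemPot, ← hη_def]
  have hI_nonneg : 0 ≤ ∫ y in Set.Ioo (-η) η, (1 + ε ^ 2 * y) * (g y) ^ 4 := by
    apply setIntegral_nonneg measurableSet_Ioo
    intro y hy
    obtain ⟨⟨h12, _⟩, _, _, _⟩ := hkey y hy
    exact mul_nonneg (by linarith) (by positivity)
  by_cases h4 : Integrable (fun y => (1 + ε ^ 2 * y) * (g y) ^ 4)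
      (volume.restrict (Set.Ioo (-η) η))
  · -- the quartic term is integrable: split the energy
    have hg2int : Integrable (fun y => (g y) ^ 2) (volume.restrict (Set.Ioo (-η) η)) := by
      have := hgL2.integrable_sq
      rw [← hη_def] at this
      exact this
    have hd2int : Integrable (fun y => (deriv g y) ^ 2)
        (volume.restrict (Set.Ioo (-η) η)) := by
      have := hgdL2.integrable_sq
      rw [← hη_def] at this
      exact this
    have hcont1 : Continuous fun y : ℝ => 1 + ε ^ 2 * y :=
      continuous_const.add (continuous_const.mul continuous_id')
    have hKint : Integrable (fun y => (1 + ε ^ 2 * y) * (1 / 2 * (deriv g y) ^ 2))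
        (volume.restrict (Set.Ioo (-η) η)) := by
      apply Integrable.mono' (hd2int.const_mul (3 / 4))
      · exact (hcont1.measurable.mul
          (((measurable_deriv g).pow_const 2).const_mul (1 / 2))).aestronglyMeasurable
      · filter_upwards [ae_restrict_mem measurableSet_Ioo] with y hy
        obtain ⟨⟨h12, h32⟩, _, _, _⟩ := hkey y hy
        rw [Real.norm_eq_abs, abs_of_nonneg (mul_nonneg (by linarith) (by positivity))]
        calc (1 + ε ^ 2 * y) * (1 / 2 * (deriv g y) ^ 2)
            ≤ (3 / 2) * (1 / 2 * (deriv g y) ^ 2) :=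
              mul_le_mul_of_nonneg_right h32 (by positivity)
          _ = 3 / 4 * (deriv g y) ^ 2 := by ring
    have hvt_meas : Measurable fun y : ℝ => ε ^ 2 * y ^ 3 * vP s Ω₀ ε y :=
      ((continuous_const.mul (continuous_pow 3)).measurable).mul (measurable_vP hs)
    have hPint : Integrable (fun y => (1 + ε ^ 2 * y) *
        ((Ubeta s Ω₀ ε β y + ε ^ 2 * y ^ 3 * vP s Ω₀ ε y) * (g y) ^ 2))
        (volume.restrict (Set.Ioo (-η) η)) := by
      apply Integrable.mono'
        (hg2int.const_mul ((3 / 2) * (4 * C₁ * (1 + η ^ 2) + D * (ε ^ 2 * η) * η ^ 2)))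
      · exact hcont1.measurable.aestronglyMeasurable.mul
          ((((measurable_Ubeta (s := s) (Ω₀ := Ω₀) (ε := ε) (β := β)).add
            hvt_meas).aestronglyMeasurable).mul hg2int.aestronglyMeasurable)
      · filter_upwards [ae_restrict_mem measurableSet_Ioo] with y hy
        obtain ⟨⟨h12, h32⟩, _, hUup, hvt⟩ := hkey y hy
        have hyabs : |y| ≤ η := le_of_lt (abs_lt.mpr ⟨hy.1, hy.2⟩)
        have hy2 : y ^ 2 ≤ η ^ 2 := by
          rw [← sq_abs]
          exact pow_le_pow_left₀ (abs_nonneg y) hyabs 2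
        have hR : Ubeta s Ω₀ ε β y + ε ^ 2 * y ^ 3 * vP s Ω₀ ε y
            ≤ 4 * C₁ * (1 + η ^ 2) + D * (ε ^ 2 * η) * η ^ 2 := by
          have e1 : Ubeta s Ω₀ ε β y ≤ 4 * C₁ * (1 + η ^ 2) := by
            refine le_trans (le_abs_self _) (le_trans hUup ?_)
            apply mul_le_mul_of_nonneg_left _ (by positivity)
            linarith
          have e2 : ε ^ 2 * y ^ 3 * vP s Ω₀ ε y ≤ D * (ε ^ 2 * η) * η ^ 2 := by
            refine le_trans (le_abs_self _) (le_trans hvt ?_)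
            apply mul_le_mul_of_nonneg_left hy2
            have : (0:ℝ) ≤ ε ^ 2 * η := by positivity
            exact mul_nonneg hD.le this
          exact add_le_add e1 e2
        have hΦy := hΦ y hy
        rw [Real.norm_eq_abs, abs_of_nonneg
          (mul_nonneg (by linarith) (mul_nonneg hΦy (sq_nonneg (g y))))]
        calc (1 + ε ^ 2 * y) *
              ((Ubeta s Ω₀ ε β y + ε ^ 2 * y ^ 3 * vP s Ω₀ ε y) * (g y) ^ 2)
            ≤ (3 / 2) * ((Ubeta s Ω₀ ε β y + ε ^ 2 * y ^ 3 * vP s Ω₀ ε y) * (g y) ^ 2) :=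
              mul_le_mul_of_nonneg_right h32 (mul_nonneg hΦy (sq_nonneg (g y)))
          _ ≤ (3 / 2) * ((4 * C₁ * (1 + η ^ 2) + D * (ε ^ 2 * η) * η ^ 2) * (g y) ^ 2) := by
              apply mul_le_mul_of_nonneg_left _ (by norm_num)
              exact mul_le_mul_of_nonneg_right hR (sq_nonneg (g y))
          _ = 3 / 2 * (4 * C₁ * (1 + η ^ 2) + D * (ε ^ 2 * η) * η ^ 2) * (g y) ^ 2 := by
              ring
    have hQint : Integrable (fun y => (1 + ε ^ 2 * y) * (1 / (2 * π) * (g y) ^ 4))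
        (volume.restrict (Set.Ioo (-η) η)) :=
      (h4.const_mul (1 / (2 * π))).congr (Filter.Eventually.of_forall fun y => by ring)
    have hsplit : betaFunctional s Ω₀ η₀ ε β g
        = (∫ y in Set.Ioo (-η) η, (1 + ε ^ 2 * y) * (1 / 2 * (deriv g y) ^ 2))
          + (∫ y in Set.Ioo (-η) η, (1 + ε ^ 2 * y) *
              ((Ubeta s Ω₀ ε β y + ε ^ 2 * y ^ 3 * vP s Ω₀ ε y) * (g y) ^ 2))
          + (∫ y in Set.Ioo (-η) η, (1 + ε ^ 2 * y) * (1 / (2 * π) * (g y) ^ 4)) := by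
      rw [betaFunctional, ← hη_def]
      rw [show (fun y => (1 + ε ^ 2 * y) *
            (1 / 2 * (deriv g y) ^ 2 + Ubeta s Ω₀ ε β y * (g y) ^ 2
              + ε ^ 2 * y ^ 3 * vP s Ω₀ ε y * (g y) ^ 2 + 1 / (2 * π) * (g y) ^ 4))
          = fun y => ((1 + ε ^ 2 * y) * (1 / 2 * (deriv g y) ^ 2)
              + (1 + ε ^ 2 * y) *
                  ((Ubeta s Ω₀ ε β y + ε ^ 2 * y ^ 3 * vP s Ω₀ ε y) * (g y) ^ 2))
              + (1 + ε ^ 2 * y) * (1 / (2 * π) * (g y) ^ 4)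
        from funext fun y => by ring]
      have hKP : Integrable (fun y => (1 + ε ^ 2 * y) * (1 / 2 * (deriv g y) ^ 2)
          + (1 + ε ^ 2 * y) *
              ((Ubeta s Ω₀ ε β y + ε ^ 2 * y ^ 3 * vP s Ω₀ ε y) * (g y) ^ 2))
          (volume.restrict (Set.Ioo (-η) η)) := hKint.add hPint
      rw [integral_add hKP hQint, integral_add hKint hPint]
    have hKnn : 0 ≤ ∫ y in Set.Ioo (-η) η, (1 + ε ^ 2 * y) * (1 / 2 * (deriv g y) ^ 2) := by
      apply setIntegral_nonneg measurableSet_Ioo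
      intro y hy
      obtain ⟨⟨h12, _⟩, _, _, _⟩ := hkey y hy
      exact mul_nonneg (by linarith) (by positivity)
    have hPnn : 0 ≤ ∫ y in Set.Ioo (-η) η, (1 + ε ^ 2 * y) *
        ((Ubeta s Ω₀ ε β y + ε ^ 2 * y ^ 3 * vP s Ω₀ ε y) * (g y) ^ 2) := by
      apply setIntegral_nonneg measurableSet_Ioo
      intro y hy
      obtain ⟨⟨h12, _⟩, _, _, _⟩ := hkey y hy
      exact mul_nonneg (by linarith) (mul_nonneg (hΦ y hy) (sq_nonneg (g y)))
    have hQval : (∫ y in Set.Ioo (-η) η, (1 + ε ^ 2 * y) * (1 / (2 * π) * (g y) ^ 4))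
        = 1 / (2 * π) * ∫ y in Set.Ioo (-η) η, (1 + ε ^ 2 * y) * (g y) ^ 4 := by
      rw [show (fun y => (1 + ε ^ 2 * y) * (1 / (2 * π) * (g y) ^ 4))
          = fun y => 1 / (2 * π) * ((1 + ε ^ 2 * y) * (g y) ^ 4)
        from funext fun y => by ring]
      exact MeasureTheory.integral_const_mul _ _
    have hEeq : betaEnergy s Ω₀ η₀ ε β
        = (∫ y in Set.Ioo (-η) η, (1 + ε ^ 2 * y) * (1 / 2 * (deriv g y) ^ 2))
          + (∫ y in Set.Ioo (-η) η, (1 + ε ^ 2 * y) *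
              ((Ubeta s Ω₀ ε β y + ε ^ 2 * y ^ 3 * vP s Ω₀ ε y) * (g y) ^ 2))
          + 1 / (2 * π) * ∫ y in Set.Ioo (-η) η, (1 + ε ^ 2 * y) * (g y) ^ 4 := by
      rw [← hgE, hsplit, hQval]
    have hQE : 1 / (2 * π) * (∫ y in Set.Ioo (-η) η, (1 + ε ^ 2 * y) * (g y) ^ 4)
        ≤ betaEnergy s Ω₀ η₀ ε β := by
      rw [hEeq]
      linarith [hKnn, hPnn]
    have hQnn : 0 ≤ 1 / (2 * π) * ∫ y in Set.Ioo (-η) η, (1 + ε ^ 2 * y) * (g y) ^ 4 :=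
      mul_nonneg (by positivity) hI_nonneg
    refine ⟨?_, ?_, ?_⟩
    · rw [hchem]; linarith
    · rw [hchem]; linarith
    · rw [hchem]; linarith [hE_le]
  · -- quartic term not integrable: junk value 0
    have hI0 : (∫ y in Set.Ioo (-η) η, (1 + ε ^ 2 * y) * (g y) ^ 4) = 0 :=
      integral_undef h4
    rw [hchem, hI0, mul_zero, add_zero]
    exact ⟨le_refl _, by linarith [hE_nonneg], by linarith [hE_nonneg, hE_le]⟩

end
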